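/- Suppose R is a von Neumann regular ring and α is an action of a group G on R by ring automorphisms such that the identity is the only element g of G for which α(g) is a corner-inner automorphism. Then the skew group ring R*_α G is a simple ring if and only if R is G-simple. -/

import Mathlib

/-- `S` is a skew group ring `R*_α G`: the ring hom `ι : R →+* S` and the monoid hom
`σ : G →* S` realize `R` and `G` inside `S`, every element of `S` is uniquely a finite
sum `∑_g ι(r_g) * σ(g)` (so `S` is a free left `R`-module with basis the image of `G`),
and multiplication is twisted by the action: `σ(g) * ι(r) = ι(α(g)(r)) * σ(g)`. -/
structure IsSkewGroupRing (R : Type*) [Ring R] (G : Type*) [Group G]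
    (α : G →* RingAut R) (S : Type*) [Ring S] (ι : R →+* S) (σ : G →* S) : Prop where
  repr_existsUnique : ∀ s : S, ∃! c : G →₀ R, s = c.sum fun g r => ι r * σ g
  commutes : ∀ (g : G) (r : R), σ g * ι r = ι (α g r) * σ g

/-- `R` is `G`-simple (with respect to the action `α : G →* RingAut R`): `R` is nonzero
and the only `G`-invariant two-sided ideals of `R` are `0` and `R`. -/
def IsGSimple (R : Type*) [Ring R] {G : Type*} [Group G] (α : G →* RingAut R) : Prop :=
  Nontrivial R ∧
    ∀ I : TwoSidedIdeal R, (∀ (g : G), ∀ r ∈ I, α g r ∈ I) → I = ⊥ ∨ I = ⊤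

/-- An automorphism `f` of `R` is corner-inner if there is a nonzero idempotent `e ∈ R`
such that, with `e' = f⁻¹(e)`, there exist `u ∈ eRe'` and `v ∈ e'Re` with `uv = e`,
`vu = e'`, `f(x) = u x v` for all `x ∈ e'Re'`, and `f⁻¹(y) = v y u` for all `y ∈ eRe`. -/
def IsCornerInner {R : Type*} [Ring R] (f : R ≃+* R) : Prop :=
  ∃ e : R, IsIdempotentElem e ∧ e ≠ 0 ∧
    ∃ u v : R, u = e * u * f.symm e ∧ v = f.symm e * v * e ∧
      u * v = e ∧ v * u = f.symm e ∧
      (∀ x : R, f (f.symm e * x * f.symm e) = u * (f.symm e * x * f.symm e) * v) ∧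
      (∀ y : R, f.symm (e * y * e) = v * (e * y * e) * u)

section KeyLemma

/-- Fisher–Montgomery style key lemma: a nonzero `(1, α)`-intertwining relation on a
von Neumann regular ring forces `α` to be corner-inner. -/
lemma isCornerInner_of_rel {R : Type*} [Ring R] (hreg : ∀ a : R, ∃ x : R, a * x * a = a)
    (α : R ≃+* R) (t w : R) (hw : w ≠ 0)
    (H : ∀ r s r' s' : R, r * t * s = r' * t * s' → r * w * α s = r' * w * α s') :
    IsCornerInner α := by
  have gen1 : ∀ {a b c : R}, a * b = c → ∀ z : R, a * (b * z) = c * z :=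
    fun {a b c} h z => by rw [← mul_assoc, h]
  have gen2 : ∀ {a b c d : R}, a * (b * c) = d → ∀ z : R, a * (b * (c * z)) = d * z :=
    fun {a b c d} h z => by rw [← mul_assoc b c z, ← mul_assoc a (b * c) z, h]
  obtain ⟨y, hy₀⟩ := hreg w
  have hy0' : w * (y * w) = w := by rw [← mul_assoc]; exact hy₀
  have Gwyw := gen2 hy0'
  obtain ⟨f, hfdef⟩ : ∃ f : R, f = y * w := ⟨_, rfl⟩
  have hwf : w * f = w := by rw [hfdef, ← mul_assoc]; exact hy₀
  have Gwf := gen1 hwf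
  have hff : f * f = f := by rw [hfdef, mul_assoc, hy0']
  have hsf : α.symm f * α.symm f = α.symm f := by rw [← map_mul, hff]
  obtain ⟨t₂, ht₂def⟩ : ∃ t₂ : R, t₂ = w * (y * (t * (α.symm f))) := ⟨_, rfl⟩
  have Gt₂def : ∀ z : R, w * (y * (t * (α.symm f * z))) = t₂ * z := fun z => by
    rw [ht₂def]; simp only [mul_assoc]
  have ht₂f : t₂ * α.symm f = t₂ := by simp only [ht₂def, mul_assoc, hsf]
  have Gt₂f := gen1 ht₂f
  obtain ⟨x₀, hx₀⟩ := hreg t₂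
  have hx₀' : t₂ * (x₀ * t₂) = t₂ := by rw [← mul_assoc]; exact hx₀
  have Gx₀ := gen2 hx₀'
  obtain ⟨x, hxdef⟩ : ∃ x : R, x = α.symm f * (x₀ * (t₂ * x₀)) := ⟨_, rfl⟩
  have hfx : α.symm f * x = x := by rw [hxdef, ← mul_assoc, hsf]
  have ht₂x : t₂ * (x * t₂) = t₂ := by
    simp only [hxdef, mul_assoc, Gt₂f, Gx₀, hx₀']
  have hxt₂ : x * (t₂ * x) = x := by
    simp only [hxdef, mul_assoc, Gt₂f, Gx₀, hx₀']
  have Gt₂x := gen2 ht₂x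
  have Gxt₂ := gen2 hxt₂
  -- first instance of H
  have key1 : (t₂ * (x * (w * y))) * t * (α.symm f) = (w * y) * t * (α.symm f) := by
    simp only [mul_assoc]
    rw [← ht₂def]
    exact ht₂x
  have hA : t₂ * (x * w) = w := by
    have h := H _ _ _ _ key1
    simp only [RingEquiv.apply_symm_apply, mul_assoc, Gwf, hwf, Gwyw, hy0'] at h
    exact h
  have GA := gen2 hA
  -- second instance of H
  have hstar : ∀ r : R, w * α (x * (r * t₂)) = t₂ * (x * (r * w)) := by
    intro r
    have key2 : (w * y) * t * (α.symm f * (x * (r * t₂)))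
        = (t₂ * (x * (r * (w * y)))) * t * (α.symm f) := by
      simp only [mul_assoc]
      rw [Gt₂def, ← ht₂def]
    have h := H _ _ _ _ key2
    rw [show α (α.symm f * (x * (r * t₂))) = f * α (x * (r * t₂)) from by
      rw [map_mul, RingEquiv.apply_symm_apply]] at h
    simp only [RingEquiv.apply_symm_apply, mul_assoc, Gwf, hwf, Gwyw, hy0'] at h
    exact h
  obtain ⟨p, hpdef⟩ : ∃ p : R, p = x * t₂ := ⟨_, rfl⟩
  have hp : p * p = p := by simp only [hpdef, mul_assoc, ht₂x]
  obtain ⟨e₂, he₂def⟩ : ∃ e₂ : R, e₂ = α p := ⟨_, rfl⟩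
  have hwe₂ : w * e₂ = w := by
    have h := hstar (t₂ * x)
    simp only [mul_assoc] at h
    simp only [ht₂x, Gt₂x, hA] at h
    rw [← hpdef] at h
    rw [← he₂def] at h
    exact h
  have Gwe₂ := gen1 hwe₂
  have hfp : α.symm f * p = p := by rw [hpdef, ← mul_assoc, hfx]
  have hfe₂ : f * e₂ = e₂ := by
    have h : α (α.symm f * p) = α p := by rw [hfp]
    rw [map_mul, RingEquiv.apply_symm_apply] at h
    rw [he₂def]; exact h
  have hyw : y * w = e₂ := by rw [← hfe₂, hfdef, mul_assoc, hwe₂]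
  have Gyw := gen1 hyw
  have he₂e₂ : e₂ * e₂ = e₂ := by rw [he₂def, ← map_mul, hp]
  have Ge₂ := gen1 he₂e₂
  have hwyt₂ : w * (y * t₂) = t₂ := by simp only [ht₂def, mul_assoc, Gwyw, hy0']
  obtain ⟨u, hudef⟩ : ∃ u : R, u = e₂ * (y * t₂) := ⟨_, rfl⟩
  obtain ⟨v, hvdef⟩ : ∃ v : R, v = x * w := ⟨_, rfl⟩
  have huv : u * v = e₂ := by simp only [hudef, hvdef, mul_assoc, hA, hyw, he₂e₂]
  have hvu : v * u = p := by simp only [hvdef, hudef, mul_assoc, Gwe₂, hwyt₂, hpdef]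
  have hup : u * p = u := by simp only [hudef, hpdef, mul_assoc, ht₂x]
  have hpv : p * v = v := by simp only [hpdef, hvdef, mul_assoc, Gxt₂, hxt₂]
  have Gup := gen1 hup
  have Gpv := gen1 hpv
  have Guv := gen1 huv
  have hsymm : α.symm e₂ = p := by rw [he₂def, RingEquiv.symm_apply_apply]
  have hconj : ∀ z : R, α (p * (z * p)) = u * (p * (z * (p * v))) := by
    intro z
    have h := hstar (t₂ * (z * x))
    simp only [mul_assoc] at h
    rw [show x * (t₂ * (z * (x * t₂))) = p * (z * p) from by
      simp only [hpdef, mul_assoc]] at h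
    rw [Gt₂x] at h
    have hred : u * (p * (z * (p * v))) = e₂ * (y * (t₂ * (z * (x * w)))) := by
      simp only [hudef, hvdef, hpdef, mul_assoc, hA, GA, Gt₂x, ht₂x]
    rw [hred, ← h]
    rw [show α (p * (z * p)) = e₂ * (α z * e₂) from by rw [map_mul, map_mul, he₂def]]
    simp only [Gwe₂, Gyw, Ge₂]
  refine ⟨e₂, he₂e₂, ?_, u, v, ?_, ?_, huv, ?_, ?_, ?_⟩
  · intro h0
    apply hw
    have hp0 : p = 0 := by rw [← hsymm, h0, map_zero]
    have ht₂0 : t₂ = 0 := by rw [← ht₂x, ← hpdef, hp0, mul_zero]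
    rw [← hA, ht₂0, zero_mul]
  · rw [hsymm]
    simp only [hudef, hpdef, mul_assoc, Ge₂, ht₂x]
  · rw [hsymm]
    simp only [hvdef, hpdef, mul_assoc, Gxt₂, hwe₂]
  · rw [hsymm]; exact hvu
  · intro z
    rw [hsymm]
    simp only [mul_assoc]
    exact hconj z
  · intro z
    have hpvu : v * (z * u) = p * ((v * (z * u)) * p) := by
      simp only [hvdef, hudef, hpdef, mul_assoc, Gxt₂, ht₂x]
    have h8 : α (v * (z * u)) = e₂ * (z * e₂) := by
      rw [hpvu, hconj (v * (z * u))]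
      simp only [mul_assoc, Gpv, hpv, Gup, hup, Guv, huv]
    calc α.symm (e₂ * z * e₂) = α.symm (α (v * (z * u))) := by rw [h8, mul_assoc]
      _ = v * (z * u) := RingEquiv.symm_apply_apply α _
      _ = v * (e₂ * z * e₂) * u := by simp only [hvdef, hudef, mul_assoc, Gwe₂, Ge₂]

end KeyLemma

section SkewAux

variable {R : Type*} [Ring R] {G : Type*} [Group G] {α : G →* RingAut R}
  {S : Type*} [Ring S] {ι : R →+* S} {σ : G →* S}

namespace IsSkewGroupRing

/-- the coefficient finsupp of an element of the skew group ring -/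
noncomputable def rep (hS : IsSkewGroupRing R G α S ι σ) (s : S) : G →₀ R :=
  (hS.repr_existsUnique s).choose

lemma rep_spec (hS : IsSkewGroupRing R G α S ι σ) (s : S) :
    s = (hS.rep s).sum fun g r => ι r * σ g :=
  (hS.repr_existsUnique s).choose_spec.1

lemma rep_unique (hS : IsSkewGroupRing R G α S ι σ) {s : S} {c : G →₀ R}
    (h : s = c.sum fun g r => ι r * σ g) : hS.rep s = c :=
  (hS.repr_existsUnique s).unique (hS.rep_spec s) h

lemma rep_zero (hS : IsSkewGroupRing R G α S ι σ) : hS.rep 0 = 0 :=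
  hS.rep_unique (by rw [Finsupp.sum_zero_index])

lemma eq_zero_of_rep_eq_zero (hS : IsSkewGroupRing R G α S ι σ) {s : S}
    (h : hS.rep s = 0) : s = 0 := by
  rw [hS.rep_spec s, h, Finsupp.sum_zero_index]

lemma rep_add (hS : IsSkewGroupRing R G α S ι σ) (s s' : S) :
    hS.rep (s + s') = hS.rep s + hS.rep s' :=
  hS.rep_unique (by
    rw [Finsupp.sum_add_index' (fun g => by rw [map_zero, zero_mul])
      (fun g r₁ r₂ => by rw [map_add, add_mul]), ← hS.rep_spec, ← hS.rep_spec])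

lemma rep_neg (hS : IsSkewGroupRing R G α S ι σ) (s : S) : hS.rep (-s) = -hS.rep s := by
  have h := hS.rep_add s (-s)
  rw [add_neg_cancel, hS.rep_zero] at h
  exact (neg_eq_of_add_eq_zero_right h.symm).symm

lemma rep_sub (hS : IsSkewGroupRing R G α S ι σ) (s s' : S) :
    hS.rep (s - s') = hS.rep s - hS.rep s' := by
  rw [sub_eq_add_neg, hS.rep_add, hS.rep_neg, sub_eq_add_neg]

lemma rep_iota_mul_sigma (hS : IsSkewGroupRing R G α S ι σ) (r : R) (g : G) :
    hS.rep (ι r * σ g) = Finsupp.single g r :=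
  hS.rep_unique (by rw [Finsupp.sum_single_index (by rw [map_zero, zero_mul])])

lemma rep_iota (hS : IsSkewGroupRing R G α S ι σ) (r : R) :
    hS.rep (ι r) = Finsupp.single 1 r := by
  have := hS.rep_iota_mul_sigma r 1
  rwa [map_one, mul_one] at this

lemma rep_one (hS : IsSkewGroupRing R G α S ι σ) :
    hS.rep 1 = Finsupp.single 1 1 := by
  have := hS.rep_iota 1
  rwa [map_one] at this

lemma iota_injective (hS : IsSkewGroupRing R G α S ι σ) {r : R} (h : ι r = 0) : r = 0 := by
  have h1 := hS.rep_iota r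
  rw [h, hS.rep_zero] at h1
  exact (Finsupp.single_eq_zero.mp h1.symm)

lemma rep_iota_mul_mul_iota (hS : IsSkewGroupRing R G α S ι σ) (r r' : R) (s : S) (g : G) :
    hS.rep (ι r * s * ι r') g = r * hS.rep s g * α g r' := by
  classical
  have hc : ∀ a : G, (fun g0 => r * hS.rep s g0 * α g0 r') a ≠ 0 → a ∈ (hS.rep s).support := by
    intro a ha
    rw [Finsupp.mem_support_iff]
    intro h0
    exact ha (by show r * hS.rep s a * α a r' = 0; rw [h0, mul_zero, zero_mul])
  have hrep : hS.rep (ι r * s * ι r')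
      = Finsupp.onFinset (hS.rep s).support (fun g0 => r * hS.rep s g0 * α g0 r') hc := by
    apply hS.rep_unique
    rw [Finsupp.sum_of_support_subset _ Finsupp.support_onFinset_subset _
      (fun i _ => by rw [map_zero, zero_mul])]
    calc ι r * s * ι r' = ι r * ((hS.rep s).sum fun g0 r0 => ι r0 * σ g0) * ι r' := by
          rw [← hS.rep_spec]
      _ = (hS.rep s).sum (fun g0 r0 => ι r * (ι r0 * σ g0) * ι r') := by
          rw [Finsupp.mul_sum, Finsupp.sum_mul]
      _ = ∑ a ∈ (hS.rep s).support, ι (r * hS.rep s a * α a r') * σ a := by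
          apply Finset.sum_congr rfl
          intro a _
          show ι r * (ι (hS.rep s a) * σ a) * ι r' = _
          rw [← mul_assoc, ← map_mul, mul_assoc, hS.commutes, ← mul_assoc, ← map_mul]
      _ = ∑ a ∈ (hS.rep s).support,
            ι (Finsupp.onFinset (hS.rep s).support (fun g0 => r * hS.rep s g0 * α g0 r') hc a)
              * σ a := by
          apply Finset.sum_congr rfl
          intro a _
          rw [Finsupp.onFinset_apply]
  rw [hrep, Finsupp.onFinset_apply]

lemma rep_iota_mul (hS : IsSkewGroupRing R G α S ι σ) (r : R) (s : S) (g : G) :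
    hS.rep (ι r * s) g = r * hS.rep s g := by
  have := hS.rep_iota_mul_mul_iota r 1 s g
  rwa [map_one, mul_one, map_one, mul_one] at this

lemma rep_mul_iota (hS : IsSkewGroupRing R G α S ι σ) (r : R) (s : S) (g : G) :
    hS.rep (s * ι r) g = hS.rep s g * α g r := by
  have := hS.rep_iota_mul_mul_iota 1 r s g
  rwa [map_one, one_mul, one_mul] at this

lemma rep_mul_sigma (hS : IsSkewGroupRing R G α S ι σ) (s : S) (h : G) :
    hS.rep (s * σ h) = Finsupp.equivMapDomain (Equiv.mulRight h) (hS.rep s) := by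
  apply hS.rep_unique
  rw [Finsupp.sum_equivMapDomain]
  calc s * σ h = ((hS.rep s).sum fun g r => ι r * σ g) * σ h := by rw [← hS.rep_spec]
    _ = (hS.rep s).sum (fun g r => ι r * σ g * σ h) := by rw [Finsupp.sum_mul]
    _ = (hS.rep s).sum (fun g r => ι r * σ ((Equiv.mulRight h) g)) := by
        apply Finsupp.sum_congr
        intro a _
        rw [mul_assoc, ← map_mul]
        rfl

lemma rep_mul_sigma_apply (hS : IsSkewGroupRing R G α S ι σ) (s : S) (h g : G) :
    hS.rep (s * σ h) g = hS.rep s (g * h⁻¹) := by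
  rw [hS.rep_mul_sigma, Finsupp.equivMapDomain_apply]
  rfl

lemma card_support_rep_mul_sigma (hS : IsSkewGroupRing R G α S ι σ) (s : S) (h : G) :
    (hS.rep (s * σ h)).support.card = (hS.rep s).support.card := by
  rw [hS.rep_mul_sigma]
  exact Finset.card_map _

lemma rep_sigma_mul (hS : IsSkewGroupRing R G α S ι σ) (s : S) (h : G) :
    hS.rep (σ h * s) = Finsupp.equivMapDomain (Equiv.mulLeft h)
      ((hS.rep s).mapRange (α h) (map_zero _)) := by
  apply hS.rep_unique
  rw [Finsupp.sum_equivMapDomain, Finsupp.sum_mapRange_index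
    (fun a => by rw [map_zero, zero_mul])]
  calc σ h * s = σ h * ((hS.rep s).sum fun g r => ι r * σ g) := by rw [← hS.rep_spec]
    _ = (hS.rep s).sum (fun g r => σ h * (ι r * σ g)) := by rw [Finsupp.mul_sum]
    _ = (hS.rep s).sum (fun g r => ι (α h r) * σ ((Equiv.mulLeft h) g)) := by
        apply Finsupp.sum_congr
        intro a _
        rw [← mul_assoc, hS.commutes, mul_assoc, ← map_mul]
        rfl

lemma rep_sigma_mul_apply (hS : IsSkewGroupRing R G α S ι σ) (s : S) (h g : G) :
    hS.rep (σ h * s) g = α h (hS.rep s (h⁻¹ * g)) := by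
  rw [hS.rep_sigma_mul, Finsupp.equivMapDomain_apply]
  rfl

end IsSkewGroupRing

end SkewAux

/-- Suppose `R` is a von Neumann regular ring and `α` an action of a group `G` on `R`
such that `1` is the only element of `G` whose image under `α` is corner-inner. Then the
skew group ring `R*_α G` is simple if and only if `R` is `G`-simple. -/
theorem skewGroupRing_isSimpleRing_iff_isGSimple_of_not_cornerInner
    {R : Type*} [Ring R] (hreg : ∀ a : R, ∃ x : R, a * x * a = a)
    {G : Type*} [Group G] (α : G →* RingAut R)
    (hcorner : ∀ g : G, IsCornerInner (α g) → g = 1)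
    {S : Type*} [Ring S] (ι : R →+* S) (σ : G →* S)
    (hS : IsSkewGroupRing R G α S ι σ) :
    IsSimpleRing S ↔ IsGSimple R α := by
  classical
  constructor
  · -- simple → G-simple
    intro hsimple
    haveI := hsimple
    refine ⟨?_, ?_⟩
    · by_contra hnt
      rw [not_nontrivial_iff_subsingleton] at hnt
      have hall : (1 : S) = 0 := by
        rw [hS.rep_spec 1]
        apply Finset.sum_eq_zero
        intro g _
        rw [Subsingleton.elim (hS.rep 1 g) 0]
        show ι (0 : R) * σ g = 0
        rw [map_zero, zero_mul]
      exact one_ne_zero hall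
    · intro I hInv
      rcases eq_or_ne I ⊥ with h | h
      · exact Or.inl h
      right
      obtain ⟨r₀, hr₀I, hr₀⟩ : ∃ r, r ∈ I ∧ r ≠ 0 := by
        by_contra hno
        push_neg at hno
        refine h (le_antisymm ?_ bot_le)
        intro x hx
        exact (TwoSidedIdeal.mem_bot _).mpr (hno x hx)
      -- the ideal of S with all coefficients in I
      have hsum_mem : ∀ (c : G →₀ R) (F : G → R → S),
          (∀ h r, ∀ g, hS.rep (F h r) g ∈ I) → ∀ g, hS.rep (c.sum F) g ∈ I := by
        intro c F hF g
        have hrs : hS.rep (∑ a ∈ c.support, F a (c a)) = ∑ a ∈ c.support, hS.rep (F a (c a)) :=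
          map_sum (AddMonoidHom.mk' hS.rep hS.rep_add) _ _
        show (hS.rep (∑ a ∈ c.support, F a (c a))) g ∈ I
        rw [hrs, Finsupp.finset_sum_apply]
        exact sum_mem (fun a _ => hF a (c a) g)
      set J' : TwoSidedIdeal S := TwoSidedIdeal.mk' {s : S | ∀ g, hS.rep s g ∈ I}
        (fun g => by rw [hS.rep_zero]; exact I.zero_mem)
        (fun {s1 s2} h1 h2 g => by rw [hS.rep_add]; exact I.add_mem (h1 g) (h2 g))
        (fun {s1} h1 g => by rw [hS.rep_neg]; exact I.neg_mem (h1 g))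
        (fun {x y} hy g => by
          have hxy : x * y = (hS.rep x).sum (fun h r => ι r * (σ h * y)) := by
            conv_lhs => rw [hS.rep_spec x]
            rw [Finsupp.sum_mul]
            exact Finsupp.sum_congr (fun a _ => by rw [mul_assoc])
          rw [hxy]
          refine hsum_mem _ _ (fun h r g' => ?_) g
          rw [hS.rep_iota_mul, hS.rep_sigma_mul_apply]
          exact I.mul_mem_left _ _ (hInv h _ (hy _)))
        (fun {x y} hx g => by
          have hxy : x * y = (hS.rep y).sum (fun h r => (x * ι r) * σ h) := by
            conv_lhs => rw [hS.rep_spec y]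
            rw [Finsupp.mul_sum]
            exact Finsupp.sum_congr (fun a _ => by rw [mul_assoc])
          rw [hxy]
          refine hsum_mem _ _ (fun h r g' => ?_) g
          rw [hS.rep_mul_sigma_apply, hS.rep_mul_iota]
          exact I.mul_mem_right _ _ (hx _))
        with hJ'def
      have hmem : ∀ s : S, s ∈ J' ↔ ∀ g, hS.rep s g ∈ I := fun s => by
        rw [hJ'def, TwoSidedIdeal.mem_mk']
        rfl
      rcases hsimple.simple.eq_bot_or_eq_top J' with hb | ht
      · exfalso
        have hmemι : ι r₀ ∈ J' := by
          rw [hmem]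
          intro g
          rw [hS.rep_iota]
          rcases eq_or_ne g 1 with rfl | hg
          · rw [Finsupp.single_eq_same]; exact hr₀I
          · rw [Finsupp.single_eq_of_ne' (Ne.symm hg)]; exact I.zero_mem
        rw [hb, TwoSidedIdeal.mem_bot] at hmemι
        exact hr₀ (hS.iota_injective hmemι)
      · have h1 : (1 : S) ∈ J' := by rw [ht]; trivial
        have h1I := (hmem 1).mp h1 1
        rw [hS.rep_one, Finsupp.single_eq_same] at h1I
        exact TwoSidedIdeal.eq_top I h1I
  · -- G-simple → simple
    intro hGs
    obtain ⟨hntR, hIdeals⟩ := hGs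
    haveI : Nontrivial R := hntR
    haveI : Nontrivial S := by
      refine ⟨1, 0, fun h10 => ?_⟩
      have h1 := hS.rep_one
      rw [h10, hS.rep_zero] at h1
      exact one_ne_zero (Finsupp.single_eq_zero.mp h1.symm)
    refine IsSimpleRing.of_eq_bot_or_eq_top (fun J => ?_)
    rcases eq_or_ne J ⊥ with h | hJ
    · exact Or.inl h
    right
    obtain ⟨a₀, ha₀J, ha₀⟩ : ∃ x, x ∈ J ∧ x ≠ 0 := by
      by_contra hno
      push_neg at hno
      refine hJ (le_antisymm ?_ bot_le)
      intro x hx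
      exact (TwoSidedIdeal.mem_bot _).mpr (hno x hx)
    -- minimal support size
    set N : Set ℕ := {n | ∃ b, b ∈ J ∧ b ≠ 0 ∧ (hS.rep b).support.card = n} with hNdef
    have hNne : N.Nonempty := ⟨_, a₀, ha₀J, ha₀, rfl⟩
    obtain ⟨b, hbJ, hb0, hbcard⟩ := Nat.sInf_mem hNne
    have hmin : ∀ c ∈ J, (hS.rep c).support.card < sInf N → c = 0 := by
      intro c hc hlt
      by_contra hc0
      have hcN : (hS.rep c).support.card ∈ N := ⟨c, hc, hc0, rfl⟩
      exact absurd (Nat.sInf_le hcN) (by omega)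
    -- translate so that 1 is in the support
    have hsupp_ne : (hS.rep b).support.Nonempty := by
      rw [Finsupp.support_nonempty_iff]
      intro hrb
      exact hb0 (hS.eq_zero_of_rep_eq_zero hrb)
    obtain ⟨h₀, hh₀⟩ := hsupp_ne
    set a : S := b * σ h₀⁻¹ with hadef
    have haJ : a ∈ J := J.mul_mem_right _ _ hbJ
    have harep : ∀ g, hS.rep a g = hS.rep b (g * h₀) := by
      intro g
      rw [hadef, hS.rep_mul_sigma_apply, inv_inv]
    have hacard : (hS.rep a).support.card = sInf N := by
      rw [hadef, hS.card_support_rep_mul_sigma, hbcard]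
    have ha1 : hS.rep a 1 ≠ 0 := by
      rw [harep, one_mul]
      exact Finsupp.mem_support_iff.mp hh₀
    -- the support of a is {1}
    have hsupp1 : ∀ g ∈ (hS.rep a).support, g = 1 := by
      intro g hg
      by_contra hg1
      apply hg1
      apply hcorner
      refine isCornerInner_of_rel hreg (α g) (hS.rep a 1) (hS.rep a g)
        (Finsupp.mem_support_iff.mp hg) ?_
      intro r s r' s' hrts
      set b' : S := ι r * a * ι s - ι r' * a * ι s' with hb'def
      have hb'J : b' ∈ J := J.sub_mem
        (J.mul_mem_right _ _ (J.mul_mem_left _ _ haJ))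
        (J.mul_mem_right _ _ (J.mul_mem_left _ _ haJ))
      have hb'rep : ∀ g'', hS.rep b' g''
          = r * hS.rep a g'' * α g'' s - r' * hS.rep a g'' * α g'' s' := by
        intro g''
        rw [hb'def, hS.rep_sub, Finsupp.sub_apply, hS.rep_iota_mul_mul_iota,
          hS.rep_iota_mul_mul_iota]
      have hb'1 : hS.rep b' 1 = 0 := by
        rw [hb'rep 1]
        simp only [map_one, RingHom.id_apply]
        rw [show ((1 : RingAut R) : R → R) s = s from rfl,
          show ((1 : RingAut R) : R → R) s' = s' from rfl]
        rw [hrts, sub_self]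
      have hsuppb' : (hS.rep b').support ⊆ (hS.rep a).support.erase 1 := by
        intro g'' hgm
        rw [Finset.mem_erase]
        rw [Finsupp.mem_support_iff] at hgm
        constructor
        · intro hg''
          rw [hg''] at hgm
          exact hgm hb'1
        · rw [Finsupp.mem_support_iff]
          intro h0
          apply hgm
          rw [hb'rep, h0, mul_zero, zero_mul, mul_zero, zero_mul, sub_self]
        
      have hb'0 : b' = 0 := by
        apply hmin b' hb'J
        calc (hS.rep b').support.card ≤ ((hS.rep a).support.erase 1).card :=
              Finset.card_le_card hsuppb'
          _ < (hS.rep a).support.card :=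
              Finset.card_erase_lt_of_mem (Finsupp.mem_support_iff.mpr ha1)
          _ = sInf N := hacard
      have hfin : hS.rep b' g = 0 := by rw [hb'0, hS.rep_zero]; rfl
      rw [hb'rep g] at hfin
      exact sub_eq_zero.mp hfin
    -- hence a = ι (rep a 1)
    have hrepa : hS.rep a = Finsupp.single 1 (hS.rep a 1) := by
      ext g'
      rcases eq_or_ne g' 1 with rfl | hg'
      · rw [Finsupp.single_eq_same]
      · rw [Finsupp.single_eq_of_ne' (Ne.symm hg')]
        by_contra hne
        exact hg' (hsupp1 g' (Finsupp.mem_support_iff.mpr hne))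
    have haι : a = ι (hS.rep a 1) := by
      conv_lhs => rw [hS.rep_spec a]
      rw [hrepa, Finsupp.sum_single_index (show ι (0 : R) * σ (1 : G) = 0 by
        rw [map_zero, zero_mul])]
      rw [show (σ (1 : G)) = 1 from map_one σ, mul_one, Finsupp.single_eq_same]
    -- the G-invariant ideal of coefficients
    set I : TwoSidedIdeal R := TwoSidedIdeal.mk' {r : R | ι r ∈ J}
      (by show ι 0 ∈ J; rw [map_zero]; exact J.zero_mem)
      (fun {r1 r2} h1 h2 => by show ι (r1 + r2) ∈ J; rw [map_add]; exact J.add_mem h1 h2)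
      (fun {r1} h1 => by show ι (-r1) ∈ J; rw [map_neg]; exact J.neg_mem h1)
      (fun {r1 r2} h2 => by show ι (r1 * r2) ∈ J; rw [map_mul]; exact J.mul_mem_left _ _ h2)
      (fun {r1 r2} h1 => by show ι (r1 * r2) ∈ J; rw [map_mul]; exact J.mul_mem_right _ _ h1)
      with hIdef
    have hImem : ∀ r : R, r ∈ I ↔ ι r ∈ J := fun r => by
      rw [hIdef, TwoSidedIdeal.mem_mk']
      rfl
    have hIinv : ∀ g : G, ∀ r ∈ I, α g r ∈ I := by
      intro g r hr
      rw [hImem] at hr ⊢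
      have hinv : σ g * σ g⁻¹ = 1 := by rw [← map_mul, mul_inv_cancel, map_one]
      have heq : ι (α g r) = σ g * ι r * σ g⁻¹ := by
        calc ι (α g r) = ι (α g r) * (σ g * σ g⁻¹) := by rw [hinv, mul_one]
          _ = (ι (α g r) * σ g) * σ g⁻¹ := by rw [mul_assoc]
          _ = σ g * ι r * σ g⁻¹ := by rw [hS.commutes]
      rw [heq]
      exact J.mul_mem_right _ _ (J.mul_mem_left _ _ hr)
    have hItop : I = ⊤ := by
      refine (hIdeals I hIinv).resolve_left (fun hIbot => ?_)
      have : hS.rep a 1 ∈ I := (hImem _).mpr (haι ▸ haJ)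
      rw [hIbot, TwoSidedIdeal.mem_bot] at this
      exact ha1 this
    have h1I : (1 : R) ∈ I := by rw [hItop]; trivial
    rw [hImem, map_one] at h1I
    exact TwoSidedIdeal.eq_top J h1I
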